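/- Let f(n,1,t) be the number of permutations of {1,...,n} whose permutation graph has exactly t singleton dominating sets. Then for 1 ≤ t ≤ n, f(n,1,t) = Σ_{k=1}^{n−t+1} f(n−k,1,t−1)·f(k−1,1,0), where f(0,1,0)=1. -/

import Mathlib

/-- The permutation graph of `π`: vertices `0,…,n-1` (0-indexed version of `1,…,n`),
with `i < j` adjacent iff `π⁻¹ i > π⁻¹ j`. -/
def permGraph {n : ℕ} (π : Equiv.Perm (Fin n)) : SimpleGraph (Fin n) where
  Adj i j := (i < j ∧ π.symm j < π.symm i) ∨ (j < i ∧ π.symm i < π.symm j)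
  symm := ⟨by intro i j h; tauto⟩
  loopless := ⟨by intro i h; rcases h with ⟨h, _⟩ | ⟨h, _⟩ <;> exact lt_irrefl i h⟩

/-- `D` dominates `G`: every vertex is in `D` or adjacent to an element of `D`. -/
def Dominates {V : Type*} (G : SimpleGraph V) (D : Set V) : Prop :=
  ∀ v, v ∈ D ∨ ∃ d ∈ D, G.Adj v d

/-- The domination number: minimum cardinality of a dominating set. -/
noncomputable def domNumber {V : Type*} [Fintype V] (G : SimpleGraph V) : ℕ :=
  sInf {k | ∃ D : Finset V, D.card = k ∧ Dominates G ↑D}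

/-- Closed neighborhood `N[x]`. -/
def closedNbhd {V : Type*} (G : SimpleGraph V) (x : V) : Set V :=
  {y | y = x ∨ G.Adj x y}

/-- Degree of a vertex. -/
noncomputable def deg {V : Type*} (G : SimpleGraph V) (v : V) : ℕ :=
  (G.neighborSet v).ncard

/-- `f(n,1,t)`: number of permutations of `{1,…,n}` whose permutation graph has
exactly `t` singleton dominating sets. -/
noncomputable def fDom (n t : ℕ) : ℕ :=
  Nat.card {π : Equiv.Perm (Fin n) // {k | Dominates (permGraph π) {k}}.ncard = t}

namespace FD
variable {n : ℕ}

/-- `v` is a universal vertex of the permutation graph. -/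
def Univ (π : Equiv.Perm (Fin n)) (v : Fin n) : Prop :=
  (∀ i : Fin n, i < v → π.symm v < π.symm i) ∧ (∀ j : Fin n, v < j → π.symm j < π.symm v)

theorem dom_iff (π : Equiv.Perm (Fin n)) (v : Fin n) :
    Dominates (permGraph π) {v} ↔ Univ π v := by
  constructor
  · intro h
    constructor
    · intro i hi
      rcases h i with h1 | ⟨d, hd, hadj⟩
      · exact absurd h1 (by simp [Set.mem_singleton_iff]; exact ne_of_lt hi)
      · rcases Set.mem_singleton_iff.mp hd with rfl
        rcases hadj with ⟨h2, h3⟩ | ⟨h2, h3⟩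
        · exact h3
        · exact absurd h2 (not_lt.mpr hi.le)
    · intro j hj
      rcases h j with h1 | ⟨d, hd, hadj⟩
      · exact absurd h1 (by simp [Set.mem_singleton_iff]; exact (ne_of_lt hj).symm)
      · rcases Set.mem_singleton_iff.mp hd with rfl
        rcases hadj with ⟨h2, h3⟩ | ⟨h2, h3⟩
        · exact absurd h2 (not_lt.mpr hj.le)
        · exact h3
  · rintro ⟨h1, h2⟩ w
    rcases lt_trichotomy w v with hw | rfl | hw
    · exact Or.inr ⟨v, rfl, Or.inl ⟨hw, h1 w hw⟩⟩
    · exact Or.inl rfl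
    · exact Or.inr ⟨v, rfl, Or.inr ⟨hw, h2 w hw⟩⟩

/-- if `v` is universal then its position is `n-1-v` and smaller/larger values sit after/before. -/
theorem univ_pos {π : Equiv.Perm (Fin n)} {v : Fin n} (h : Univ π v) :
    (π.symm v).val = n - 1 - v.val := by
  set p := (π.symm v).val with hp
  have hiv : ∀ i : Fin n, i.val < p → v < π i := by
    intro i hi
    rcases lt_trichotomy (π i) v with h1 | h1 | h1
    · have := h.1 (π i) h1
      simp at this
      omega
    · have : i = π.symm v := by rw [← h1]; simp
      omega
    · exact h1
  -- equiv between {i // i.val < p} and {j // v < j}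
  have e : {i : Fin n // i.val < p} ≃ {j : Fin n // v < j} :=
    { toFun := fun i => ⟨π i.1, hiv i.1 i.2⟩
      invFun := fun j => ⟨π.symm j.1, by
        have := h.2 j.1 j.2
        exact this⟩
      left_inv := fun i => by simp
      right_inv := fun j => by simp }
  have e1 : {i : Fin n // i.val < p} ≃ Fin p :=
    { toFun := fun i => ⟨i.1.val, i.2⟩
      invFun := fun i => ⟨⟨i.val, lt_trans i.2 (π.symm v).isLt⟩, i.2⟩
      left_inv := fun i => by ext; rfl
      right_inv := fun i => by ext; rfl }
  have e2 : {j : Fin n // v < j} ≃ Fin (n - 1 - v.val) :=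
    { toFun := fun j => ⟨j.1.val - (v.val + 1), by have := j.1.isLt; have := j.2; omega⟩
      invFun := fun j => ⟨⟨j.val + (v.val + 1), by have := j.isLt; omega⟩, by
        have := j.isLt
        simp only [Fin.lt_def]
        omega⟩
      left_inv := fun j => Subtype.ext (Fin.ext (by
        have := j.2; simp only [Fin.lt_def] at this
        show j.1.val - (v.val + 1) + (v.val + 1) = j.1.val
        omega))
      right_inv := fun j => Fin.ext (by
        show j.val + (v.val + 1) - (v.val + 1) = j.val
        omega) }
  have := Fintype.card_congr ((e1.symm.trans e).trans e2)
  simpa using this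


section Split
variable {π : Equiv.Perm (Fin n)} {k : ℕ}

theorem pos_eq (hk : k + 1 ≤ n) (h : Univ π ⟨n - 1 - k, by omega⟩) :
    (π.symm ⟨n - 1 - k, by omega⟩).val = k := by
  have h2 := univ_pos h
  simp only [Fin.val_mk] at h2
  omega

theorem symmB (hk : k + 1 ≤ n) (h : Univ π ⟨n - 1 - k, by omega⟩) :
    ∀ j : Fin n, n - 1 - k < j.val → (π.symm j).val < k := by
  intro j hj
  have := h.2 j (by simp [Fin.lt_def]; omega)
  rw [Fin.lt_def, pos_eq hk h] at this
  exact this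

theorem symmC (hk : k + 1 ≤ n) (h : Univ π ⟨n - 1 - k, by omega⟩) :
    ∀ j : Fin n, j.val < n - 1 - k → k < (π.symm j).val := by
  intro j hj
  have := h.1 j (by simp [Fin.lt_def]; omega)
  rw [Fin.lt_def, pos_eq hk h] at this
  exact this

theorem factB (hk : k + 1 ≤ n) (h : Univ π ⟨n - 1 - k, by omega⟩) :
    ∀ i : Fin n, i.val < k → n - 1 - k < (π i).val := by
  intro i hi
  rcases lt_trichotomy ((π i).val) (n - 1 - k) with h1 | h1 | h1
  · have := symmC hk h (π i) h1
    simp at this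
    omega
  · have : π i = ⟨n - 1 - k, by omega⟩ := Fin.ext h1
    have : i = π.symm ⟨n - 1 - k, by omega⟩ := by rw [← this]; simp
    have := pos_eq hk h
    omega
  · exact h1

theorem factC (hk : k + 1 ≤ n) (h : Univ π ⟨n - 1 - k, by omega⟩) :
    ∀ i : Fin n, k < i.val → (π i).val < n - 1 - k := by
  intro i hi
  rcases lt_trichotomy ((π i).val) (n - 1 - k) with h1 | h1 | h1
  · exact h1
  · have : π i = ⟨n - 1 - k, by omega⟩ := Fin.ext h1
    have : i = π.symm ⟨n - 1 - k, by omega⟩ := by rw [← this]; simp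
    have := pos_eq hk h
    omega
  · have := symmB hk h (π i) h1
    simp at this
    omega

/-- the sub-permutation on the top `k` values (positions `0..k-1`). -/
def topPerm (π : Equiv.Perm (Fin n)) (k : ℕ) (hk : k + 1 ≤ n)
    (h : Univ π ⟨n - 1 - k, by omega⟩) : Equiv.Perm (Fin k) where
  toFun i := ⟨(π ⟨i.val, by omega⟩).val - (n - k), by
    have := factB hk h ⟨i.val, by omega⟩ i.2
    have := (π ⟨i.val, by omega⟩).isLt
    omega⟩
  invFun j := ⟨(π.symm ⟨j.val + (n - k), by omega⟩).val, by
    exact symmB hk h _ (by simp; omega)⟩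
  left_inv := fun i => by
    apply Fin.ext
    show (π.symm ⟨_ + (n - k), _⟩).val = i.val
    have hB := factB hk h ⟨i.val, by omega⟩ i.2
    have : (⟨(π ⟨i.val, by omega⟩).val - (n - k) + (n - k), by omega⟩ : Fin n)
        = π ⟨i.val, by omega⟩ := Fin.ext (by simp; omega)
    rw [this]
    simp
  right_inv := fun j => by
    apply Fin.ext
    show (π ⟨(π.symm ⟨j.val + (n - k), by omega⟩).val, _⟩).val - (n - k) = j.val
    have : (⟨(π.symm ⟨j.val + (n - k), by omega⟩).val, by omega⟩ : Fin n)
        = π.symm ⟨j.val + (n - k), by omega⟩ := Fin.ext rfl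
    rw [this]
    simp

/-- the sub-permutation on the bottom `n-1-k` values (positions `k+1..n-1`). -/
def botPerm (π : Equiv.Perm (Fin n)) (k : ℕ) (hk : k + 1 ≤ n)
    (h : Univ π ⟨n - 1 - k, by omega⟩) : Equiv.Perm (Fin (n - 1 - k)) where
  toFun j := ⟨(π ⟨k + 1 + j.val, by omega⟩).val, by
    exact factC hk h _ (by simp; omega)⟩
  invFun j := ⟨(π.symm ⟨j.val, by omega⟩).val - (k + 1), by
    have := symmC hk h ⟨j.val, by omega⟩ j.2
    have := (π.symm ⟨j.val, by omega⟩).isLt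
    omega⟩
  left_inv := fun j => by
    apply Fin.ext
    show (π.symm ⟨(π ⟨k + 1 + j.val, _⟩).val, _⟩).val - (k + 1) = j.val
    have : (⟨(π ⟨k + 1 + j.val, by omega⟩).val, by omega⟩ : Fin n)
        = π ⟨k + 1 + j.val, by omega⟩ := Fin.ext rfl
    rw [this]
    simp
  right_inv := fun j => by
    apply Fin.ext
    show (π ⟨k + 1 + ((π.symm ⟨j.val, _⟩).val - (k + 1)), _⟩).val = j.val
    have hC := symmC hk h ⟨j.val, by omega⟩ j.2
    have : (⟨k + 1 + ((π.symm ⟨j.val, by omega⟩).val - (k + 1)), by omega⟩ : Fin n)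
        = π.symm ⟨j.val, by omega⟩ := Fin.ext (by simp; omega)
    rw [this]
    simp


theorem topPerm_symm_val (hk : k + 1 ≤ n) (h : Univ π ⟨n - 1 - k, by omega⟩) (j : Fin k) :
    ((topPerm π k hk h).symm j).val = (π.symm ⟨j.val + (n - k), by omega⟩).val := rfl

theorem botPerm_symm_val (hk : k + 1 ≤ n) (h : Univ π ⟨n - 1 - k, by omega⟩)
    (j : Fin (n - 1 - k)) :
    ((botPerm π k hk h).symm j).val = (π.symm ⟨j.val, by omega⟩).val - (k + 1) := rfl

theorem univ_top_iff (hk : k + 1 ≤ n) (h : Univ π ⟨n - 1 - k, by omega⟩) (w : Fin k) :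
    Univ (topPerm π k hk h) w ↔ Univ π ⟨w.val + (n - k), by omega⟩ := by
  have hw : ∀ j : Fin k, n - 1 - k < j.val + (n - k) := fun j => by omega
  constructor
  · rintro ⟨u1, u2⟩
    constructor
    · intro i hi
      rw [Fin.lt_def]
      rw [Fin.lt_def] at hi
      simp only [Fin.val_mk] at hi
      have hwB := symmB hk h ⟨w.val + (n - k), by omega⟩ (by simp; omega)
      rcases lt_trichotomy i.val (n - 1 - k) with h1 | h1 | h1
      · have := symmC hk h i h1
        omega
      · have hi2 : i = ⟨n - 1 - k, by omega⟩ := Fin.ext h1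
        rw [hi2]
        have := pos_eq hk h
        omega
      · set i' : Fin k := ⟨i.val - (n - k), by have := i.isLt; omega⟩ with hi'
        have := u1 i' (by rw [Fin.lt_def]; simp [hi']; omega)
        rw [Fin.lt_def, topPerm_symm_val, topPerm_symm_val] at this
        have harg : (⟨i'.val + (n - k), by have := i.isLt; omega⟩ : Fin n) = i :=
          Fin.ext (by simp [hi']; omega)
        rw [harg] at this
        exact this
    · intro j hj
      rw [Fin.lt_def] at hj ⊢
      simp only [Fin.val_mk] at hj ⊢
      have h1 : n - k ≤ j.val := by omega
      set j' : Fin k := ⟨j.val - (n - k), by have := j.isLt; omega⟩ with hj'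
      have := u2 j' (by rw [Fin.lt_def]; simp [hj']; omega)
      rw [Fin.lt_def, topPerm_symm_val, topPerm_symm_val] at this
      have harg : (⟨j'.val + (n - k), by have := j.isLt; omega⟩ : Fin n) = j :=
        Fin.ext (by simp [hj']; omega)
      rw [harg] at this
      exact this
  · rintro ⟨u1, u2⟩
    constructor
    · intro i hi
      rw [Fin.lt_def, topPerm_symm_val, topPerm_symm_val]
      have := u1 ⟨i.val + (n - k), by omega⟩ (by rw [Fin.lt_def]; simp; rw [Fin.lt_def] at hi; omega)
      rw [Fin.lt_def] at this
      exact this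
    · intro j hj
      rw [Fin.lt_def, topPerm_symm_val, topPerm_symm_val]
      have := u2 ⟨j.val + (n - k), by omega⟩ (by rw [Fin.lt_def]; simp; rw [Fin.lt_def] at hj; omega)
      rw [Fin.lt_def] at this
      exact this

theorem univ_bot_iff (hk : k + 1 ≤ n) (h : Univ π ⟨n - 1 - k, by omega⟩) (w : Fin (n - 1 - k)) :
    Univ (botPerm π k hk h) w ↔ Univ π ⟨w.val, by have := w.isLt; omega⟩ := by
  have hcmp : ∀ a b : Fin (n - 1 - k),
      ((botPerm π k hk h).symm a < (botPerm π k hk h).symm b ↔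
        π.symm ⟨a.val, by have := a.isLt; omega⟩ < π.symm ⟨b.val, by have := b.isLt; omega⟩) := by
    intro a b
    rw [Fin.lt_def, Fin.lt_def, botPerm_symm_val, botPerm_symm_val]
    have := symmC hk h ⟨a.val, by have := a.isLt; omega⟩ a.2
    have := symmC hk h ⟨b.val, by have := b.isLt; omega⟩ b.2
    omega
  constructor
  · rintro ⟨u1, u2⟩
    constructor
    · intro i hi
      rw [Fin.lt_def] at hi
      simp only [Fin.val_mk] at hi
      have hi2 : i.val < n - 1 - k := by have := w.isLt; omega
      have := (hcmp w ⟨i.val, hi2⟩).mp (u1 ⟨i.val, hi2⟩ (by rw [Fin.lt_def]; exact hi))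
      have harg : (⟨i.val, by omega⟩ : Fin n) = i := Fin.ext rfl
      rw [harg] at this
      exact this
    · intro j hj
      rw [Fin.lt_def] at hj
      simp only [Fin.val_mk] at hj
      rcases lt_trichotomy j.val (n - 1 - k) with h1 | h1 | h1
      · have := (hcmp ⟨j.val, h1⟩ w).mp (u2 ⟨j.val, h1⟩ (by rw [Fin.lt_def]; exact hj))
        have harg : (⟨j.val, by omega⟩ : Fin n) = j := Fin.ext rfl
        rw [harg] at this
        exact this
      · have hj2 : j = ⟨n - 1 - k, by omega⟩ := Fin.ext h1
        rw [hj2, Fin.lt_def, pos_eq hk h]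
        exact symmC hk h ⟨w.val, by have := w.isLt; omega⟩ w.2
      · rw [Fin.lt_def]
        have := symmB hk h j h1
        have := symmC hk h ⟨w.val, by have := w.isLt; omega⟩ w.2
        omega
  · rintro ⟨u1, u2⟩
    constructor
    · intro i hi
      rw [hcmp]
      exact u1 ⟨i.val, by have := i.isLt; omega⟩ (by rw [Fin.lt_def] at hi ⊢; exact hi)
    · intro j hj
      rw [hcmp]
      exact u2 ⟨j.val, by have := j.isLt; omega⟩ (by rw [Fin.lt_def] at hj ⊢; exact hj)


theorem univSet_split (hk : k + 1 ≤ n) (h : Univ π ⟨n - 1 - k, by omega⟩) :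
    {x : Fin n | Univ π x} =
      (fun w : Fin k => (⟨w.val + (n - k), by omega⟩ : Fin n)) '' {w | Univ (topPerm π k hk h) w}
      ∪ ({(⟨n - 1 - k, by omega⟩ : Fin n)}
        ∪ (fun w : Fin (n - 1 - k) => (⟨w.val, by have := w.isLt; omega⟩ : Fin n)) ''
            {w | Univ (botPerm π k hk h) w}) := by
  ext x
  simp only [Set.mem_setOf_eq, Set.mem_union, Set.mem_image, Set.mem_singleton_iff]
  constructor
  · intro hx
    rcases lt_trichotomy x.val (n - 1 - k) with h1 | h1 | h1
    · refine Or.inr (Or.inr ⟨⟨x.val, h1⟩, ?_, Fin.ext rfl⟩)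
      apply (univ_bot_iff hk h ⟨x.val, h1⟩).mpr
      convert hx using 2
    · exact Or.inr (Or.inl (Fin.ext h1))
    · refine Or.inl ⟨⟨x.val - (n - k), by have := x.isLt; omega⟩, ?_,
        Fin.ext (by simp only [Fin.val_mk]; omega)⟩
      apply (univ_top_iff hk h ⟨x.val - (n - k), by have := x.isLt; omega⟩).mpr
      have hxeq : (⟨(⟨x.val - (n - k), by have := x.isLt; omega⟩ : Fin k).val + (n - k),
          by have := x.isLt; omega⟩ : Fin n) = x := Fin.ext (by simp only [Fin.val_mk]; omega)
      rw [hxeq]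
      exact hx
  · rintro (⟨w, hw, rfl⟩ | h1 | ⟨w, hw, rfl⟩)
    · exact (univ_top_iff hk h w).mp hw
    · rw [h1]; exact h
    · exact (univ_bot_iff hk h w).mp hw

theorem ncard_univ_split (hk : k + 1 ≤ n) (h : Univ π ⟨n - 1 - k, by omega⟩) :
    {x : Fin n | Univ π x}.ncard =
      {w | Univ (topPerm π k hk h) w}.ncard + 1 + {w | Univ (botPerm π k hk h) w}.ncard := by
  rw [univSet_split hk h]
  have hTinj : Function.Injective (fun w : Fin k => (⟨w.val + (n - k), by omega⟩ : Fin n)) := by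
    intro a b hab
    have : a.val + (n - k) = b.val + (n - k) := congrArg Fin.val hab
    exact Fin.ext (by omega)
  have hBinj : Function.Injective
      (fun w : Fin (n - 1 - k) => (⟨w.val, by have := w.isLt; omega⟩ : Fin n)) := by
    intro a b hab
    simp only [Fin.mk.injEq] at hab
    exact Fin.ext hab
  have d1 : Disjoint ((fun w : Fin k => (⟨w.val + (n - k), by omega⟩ : Fin n)) ''
        {w | Univ (topPerm π k hk h) w})
      ({(⟨n - 1 - k, by omega⟩ : Fin n)}
        ∪ (fun w : Fin (n - 1 - k) => (⟨w.val, by have := w.isLt; omega⟩ : Fin n)) ''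
            {w | Univ (botPerm π k hk h) w}) := by
    rw [Set.disjoint_left]
    rintro a ⟨w, _, rfl⟩ (hb | ⟨w', _, hb⟩)
    · rw [Set.mem_singleton_iff] at hb
      have h2 : w.val + (n - k) = n - 1 - k := congrArg Fin.val hb
      omega
    · have h2 : w'.val = w.val + (n - k) := congrArg Fin.val hb
      have h3 := w'.isLt
      omega
  have d2 : Disjoint {(⟨n - 1 - k, by omega⟩ : Fin n)}
      ((fun w : Fin (n - 1 - k) => (⟨w.val, by have := w.isLt; omega⟩ : Fin n)) ''
          {w | Univ (botPerm π k hk h) w}) := by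
    rw [Set.disjoint_left]
    rintro a ha ⟨w', _, hb⟩
    rw [Set.mem_singleton_iff] at ha
    have h2 : w'.val = n - 1 - k := congrArg Fin.val (hb.trans ha)
    have h3 := w'.isLt
    omega
  rw [Set.ncard_union_eq d1 (Set.toFinite _) (Set.toFinite _),
    Set.ncard_union_eq d2 (Set.toFinite _) (Set.toFinite _),
    Set.ncard_image_of_injective _ hTinj, Set.ncard_image_of_injective _ hBinj,
    Set.ncard_singleton]
  omega


end Split
end FD


namespace FD
variable {n : ℕ}

/-- extend a permutation of `Fin k` to `ℕ`. -/
def natPerm {k : ℕ} (σ : Equiv.Perm (Fin k)) (a : ℕ) : ℕ :=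
  if h : a < k then (σ ⟨a, h⟩).val else a

theorem natPerm_lt {k : ℕ} (σ : Equiv.Perm (Fin k)) {a : ℕ} (h : a < k) :
    natPerm σ a < k := by
  rw [natPerm, dif_pos h]
  exact (σ ⟨a, h⟩).isLt

theorem natPerm_coe {k : ℕ} (σ : Equiv.Perm (Fin k)) (w : Fin k) :
    natPerm σ w.val = (σ w).val := by
  rw [natPerm, dif_pos w.isLt, Fin.eta]

theorem natPerm_symm_natPerm {k : ℕ} (σ : Equiv.Perm (Fin k)) (a : ℕ) :
    natPerm σ.symm (natPerm σ a) = a := by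
  by_cases h : a < k
  · have h1 : natPerm σ a = (σ ⟨a, h⟩).val := dif_pos h
    rw [h1, natPerm_coe]
    simp
  · have h1 : natPerm σ a = a := dif_neg h
    rw [h1, natPerm, dif_neg h]

section GlueN
variable (k : ℕ)

/-- nat-level glue function. -/
def gfN {m r : ℕ} (c : ℕ) (σ : Equiv.Perm (Fin m)) (τ : Equiv.Perm (Fin r)) (a : ℕ) : ℕ :=
  if a < m then natPerm σ a + (c + 1) else if a = m then c else natPerm τ (a - (m + 1))

end GlueN

/-- glue a top permutation, a universal vertex, and a bottom permutation. -/
def glue (k : ℕ) (hk : k + 1 ≤ n) (σ : Equiv.Perm (Fin k)) (τ : Equiv.Perm (Fin (n - 1 - k))) :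
    Equiv.Perm (Fin n) where
  toFun i := ⟨if i.val < k then natPerm σ i.val + (n - k) else
      if i.val = k then n - 1 - k else natPerm τ (i.val - (k + 1)), by
    split_ifs with h1 h2
    · have := natPerm_lt σ h1; omega
    · omega
    · have hb : i.val - (k + 1) < n - 1 - k := by have := i.isLt; omega
      have := natPerm_lt τ hb; omega⟩
  invFun j := ⟨if n - 1 - k < j.val then natPerm σ.symm (j.val - (n - k)) else
      if j.val = n - 1 - k then k else natPerm τ.symm j.val + (k + 1), by
    split_ifs with h1 h2
    · have hb : j.val - (n - k) < k := by have := j.isLt; omega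
      have := natPerm_lt σ.symm hb; omega
    · omega
    · have hb : j.val < n - 1 - k := by omega
      have := natPerm_lt τ.symm hb; omega⟩
  left_inv := by
    intro i
    apply Fin.ext
    simp only [Fin.val_mk]
    by_cases h1 : i.val < k
    · rw [if_pos h1]
      have hσ := natPerm_lt σ h1
      rw [if_pos (by omega : n - 1 - k < natPerm σ i.val + (n - k))]
      have : natPerm σ i.val + (n - k) - (n - k) = natPerm σ i.val := by omega
      rw [this, natPerm_symm_natPerm]
    · rw [if_neg h1]
      by_cases h2 : i.val = k
      · rw [if_pos h2, if_neg (by omega : ¬ n - 1 - k < n - 1 - k), if_pos rfl, h2]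
      · rw [if_neg h2]
        have hb : i.val - (k + 1) < n - 1 - k := by have := i.isLt; omega
        have hτ := natPerm_lt τ hb
        rw [if_neg (by omega : ¬ n - 1 - k < natPerm τ (i.val - (k + 1))),
          if_neg (by omega : ¬ natPerm τ (i.val - (k + 1)) = n - 1 - k),
          natPerm_symm_natPerm]
        omega
  right_inv := by
    intro j
    apply Fin.ext
    simp only [Fin.val_mk]
    by_cases h1 : n - 1 - k < j.val
    · rw [if_pos h1]
      have hb : j.val - (n - k) < k := by have := j.isLt; omega
      have hσ := natPerm_lt σ.symm hb
      rw [if_pos hσ]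
      have : natPerm σ.symm (j.val - (n - k)) < k := hσ
      have hrw : natPerm σ (natPerm σ.symm (j.val - (n - k))) = j.val - (n - k) := by
        have := natPerm_symm_natPerm σ.symm (j.val - (n - k))
        simpa using this
      rw [hrw]
      have := j.isLt
      omega
    · rw [if_neg h1]
      by_cases h2 : j.val = n - 1 - k
      · rw [if_pos h2, if_neg (by omega : ¬ k < k), if_pos rfl, h2]
      · rw [if_neg h2]
        have hb : j.val < n - 1 - k := by omega
        have hτ := natPerm_lt τ.symm hb
        rw [if_neg (by omega : ¬ natPerm τ.symm j.val + (k + 1) < k),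
          if_neg (by omega : ¬ natPerm τ.symm j.val + (k + 1) = k)]
        have : natPerm τ.symm j.val + (k + 1) - (k + 1) = natPerm τ.symm j.val := by omega
        rw [this]
        have := natPerm_symm_natPerm τ.symm j.val
        simpa using this

theorem glue_val {k : ℕ} (hk : k + 1 ≤ n) (σ : Equiv.Perm (Fin k))
    (τ : Equiv.Perm (Fin (n - 1 - k))) (i : Fin n) :
    ((glue k hk σ τ) i).val =
      if i.val < k then natPerm σ i.val + (n - k) else
        if i.val = k then n - 1 - k else natPerm τ (i.val - (k + 1)) := rfl

theorem glue_symm_val {k : ℕ} (hk : k + 1 ≤ n) (σ : Equiv.Perm (Fin k))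
    (τ : Equiv.Perm (Fin (n - 1 - k))) (j : Fin n) :
    ((glue k hk σ τ).symm j).val =
      if n - 1 - k < j.val then natPerm σ.symm (j.val - (n - k)) else
        if j.val = n - 1 - k then k else natPerm τ.symm j.val + (k + 1) := rfl

theorem glue_univ (k : ℕ) (hk : k + 1 ≤ n) (σ : Equiv.Perm (Fin k))
    (τ : Equiv.Perm (Fin (n - 1 - k))) :
    Univ (glue k hk σ τ) ⟨n - 1 - k, by omega⟩ := by
  have hv : ((glue k hk σ τ).symm ⟨n - 1 - k, by omega⟩).val = k := by
    rw [glue_symm_val]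
    simp
  constructor
  · intro i hi
    rw [Fin.lt_def] at hi ⊢
    simp only [Fin.val_mk] at hi
    rw [hv, glue_symm_val]
    rw [if_neg (by omega : ¬ n - 1 - k < i.val), if_neg (by omega : ¬ i.val = n - 1 - k)]
    omega
  · intro j hj
    rw [Fin.lt_def] at hj ⊢
    simp only [Fin.val_mk] at hj
    rw [hv, glue_symm_val, if_pos hj]
    exact natPerm_lt σ.symm (by have := j.isLt; omega)

theorem topPerm_val {π : Equiv.Perm (Fin n)} {k : ℕ} (hk : k + 1 ≤ n)
    (h : Univ π ⟨n - 1 - k, by omega⟩) (i : Fin k) :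
    ((topPerm π k hk h) i).val = (π ⟨i.val, by omega⟩).val - (n - k) := rfl

theorem botPerm_val {π : Equiv.Perm (Fin n)} {k : ℕ} (hk : k + 1 ≤ n)
    (h : Univ π ⟨n - 1 - k, by omega⟩) (j : Fin (n - 1 - k)) :
    ((botPerm π k hk h) j).val = (π ⟨k + 1 + j.val, by have := j.isLt; omega⟩).val := rfl

theorem top_glue (k : ℕ) (hk : k + 1 ≤ n) (σ : Equiv.Perm (Fin k))
    (τ : Equiv.Perm (Fin (n - 1 - k))) (h : Univ (glue k hk σ τ) ⟨n - 1 - k, by omega⟩) :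
    topPerm (glue k hk σ τ) k hk h = σ := by
  apply Equiv.ext
  intro i
  apply Fin.ext
  rw [topPerm_val, glue_val]
  simp only [Fin.val_mk]
  rw [if_pos i.isLt, natPerm_coe]
  omega

theorem bot_glue (k : ℕ) (hk : k + 1 ≤ n) (σ : Equiv.Perm (Fin k))
    (τ : Equiv.Perm (Fin (n - 1 - k))) (h : Univ (glue k hk σ τ) ⟨n - 1 - k, by omega⟩) :
    botPerm (glue k hk σ τ) k hk h = τ := by
  apply Equiv.ext
  intro j
  apply Fin.ext
  rw [botPerm_val, glue_val]
  simp only [Fin.val_mk]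
  rw [if_neg (by omega : ¬ k + 1 + j.val < k), if_neg (by omega : ¬ k + 1 + j.val = k)]
  have : k + 1 + j.val - (k + 1) = j.val := by omega
  rw [this, natPerm_coe]

theorem glue_top_bot {π : Equiv.Perm (Fin n)} {k : ℕ} (hk : k + 1 ≤ n)
    (h : Univ π ⟨n - 1 - k, by omega⟩) :
    glue k hk (topPerm π k hk h) (botPerm π k hk h) = π := by
  apply Equiv.ext
  intro i
  apply Fin.ext
  rw [glue_val]
  by_cases h1 : i.val < k
  · rw [if_pos h1]
    have hnp : natPerm (topPerm π k hk h) i.val = ((topPerm π k hk h) ⟨i.val, h1⟩).val := by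
      rw [natPerm, dif_pos h1]
    rw [hnp, topPerm_val]
    have harg : (⟨(⟨i.val, h1⟩ : Fin k).val, by omega⟩ : Fin n) = i := Fin.ext rfl
    rw [harg]
    have := factB hk h i h1
    omega
  · rw [if_neg h1]
    by_cases h2 : i.val = k
    · rw [if_pos h2]
      have hi : i = π.symm ⟨n - 1 - k, by omega⟩ := Fin.ext (by rw [pos_eq hk h]; exact h2)
      rw [hi]
      simp
    · rw [if_neg h2]
      have hb : i.val - (k + 1) < n - 1 - k := by have := i.isLt; omega
      have hnp : natPerm (botPerm π k hk h) (i.val - (k + 1))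
          = ((botPerm π k hk h) ⟨i.val - (k + 1), hb⟩).val := by
        rw [natPerm, dif_pos hb]
      rw [hnp, botPerm_val]
      have harg : (⟨k + 1 + (⟨i.val - (k + 1), hb⟩ : Fin (n - 1 - k)).val, by omega⟩ : Fin n)
          = i := Fin.ext (by simp only [Fin.val_mk]; omega)
      rw [harg]

end FD


namespace FD
variable {n : ℕ}

section Split2
variable {π : Equiv.Perm (Fin n)} {k : ℕ}

theorem top_ncard (hk : k + 1 ≤ n) (h : Univ π ⟨n - 1 - k, by omega⟩) :
    {w | Univ (topPerm π k hk h) w}.ncard = 0 ↔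
      ∀ x : Fin n, n - 1 - k < x.val → ¬ Univ π x := by
  rw [Set.ncard_eq_zero (Set.toFinite _), Set.eq_empty_iff_forall_notMem]
  constructor
  · intro he x hx hux
    refine he ⟨x.val - (n - k), by have := x.isLt; omega⟩ ?_
    apply (univ_top_iff hk h ⟨x.val - (n - k), by have := x.isLt; omega⟩).mpr
    have hxeq : (⟨(⟨x.val - (n - k), by have := x.isLt; omega⟩ : Fin k).val + (n - k),
        by have := x.isLt; omega⟩ : Fin n) = x := Fin.ext (by simp only [Fin.val_mk]; omega)
    rw [hxeq]
    exact hux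
  · intro hno w hw
    have hw2 := (univ_top_iff hk h w).mp hw
    exact hno _ (by simp only [Fin.val_mk]; omega) hw2

theorem bot_ncard (hk : k + 1 ≤ n) (h : Univ π ⟨n - 1 - k, by omega⟩) :
    {w | Univ (botPerm π k hk h) w}.ncard = {x : Fin n | x.val < n - 1 - k ∧ Univ π x}.ncard := by
  have himg : {x : Fin n | x.val < n - 1 - k ∧ Univ π x} =
      (fun w : Fin (n - 1 - k) => (⟨w.val, by have := w.isLt; omega⟩ : Fin n)) ''
        {w | Univ (botPerm π k hk h) w} := by
    ext x
    simp only [Set.mem_setOf_eq, Set.mem_image]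
    constructor
    · rintro ⟨h1, h2⟩
      refine ⟨⟨x.val, h1⟩, ?_, Fin.ext rfl⟩
      apply (univ_bot_iff hk h ⟨x.val, h1⟩).mpr
      have harg : (⟨(⟨x.val, h1⟩ : Fin (n - 1 - k)).val, by omega⟩ : Fin n) = x := Fin.ext rfl
      rw [harg]
      exact h2
    · rintro ⟨w, hw, rfl⟩
      have hw2 := (univ_bot_iff hk h w).mp hw
      exact ⟨w.isLt, hw2⟩
  rw [himg, Set.ncard_image_of_injective]
  intro a b hab
  simp only [Fin.mk.injEq] at hab
  exact Fin.ext hab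

/-- `π` splits at value `n-1-k`, with no universal vertex above and `t-1` below. -/
def SplitAt (t k : ℕ) (π : Equiv.Perm (Fin n)) : Prop :=
  (∃ v : Fin n, v.val = n - 1 - k ∧ Univ π v) ∧
  (∀ x : Fin n, n - 1 - k < x.val → ¬ Univ π x) ∧
  {x : Fin n | x.val < n - 1 - k ∧ Univ π x}.ncard = t - 1

theorem splitAt_univ {t : ℕ} (hk : k + 1 ≤ n) (hs : SplitAt t k π) :
    Univ π ⟨n - 1 - k, by omega⟩ := by
  obtain ⟨v, hv, hu⟩ := hs.1
  have : v = ⟨n - 1 - k, by omega⟩ := Fin.ext hv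
  exact this ▸ hu

theorem splitAt_total {t : ℕ} (ht : 1 ≤ t) (hk : k + 1 ≤ n) (hs : SplitAt t k π) :
    {x : Fin n | Univ π x}.ncard = t := by
  have h := splitAt_univ hk hs
  rw [ncard_univ_split hk h]
  have h0 := (top_ncard hk h).mpr hs.2.1
  have h1 : {w | Univ (botPerm π k hk h) w}.ncard = t - 1 := by
    rw [bot_ncard hk h]; exact hs.2.2
  omega

end Split2

/-- the central bijection. -/
noncomputable def splitEquiv (t k : ℕ) (hk : k + 1 ≤ n) :
    {π : Equiv.Perm (Fin n) // SplitAt t k π} ≃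
      ({τ : Equiv.Perm (Fin (n - 1 - k)) // {w | Univ τ w}.ncard = t - 1} ×
       {σ : Equiv.Perm (Fin k) // {w | Univ σ w}.ncard = 0}) where
  toFun p :=
    (⟨botPerm p.1 k hk (splitAt_univ hk p.2), by
        rw [bot_ncard hk (splitAt_univ hk p.2)]; exact p.2.2.2⟩,
     ⟨topPerm p.1 k hk (splitAt_univ hk p.2), by
        rw [top_ncard hk (splitAt_univ hk p.2)]; exact p.2.2.1⟩)
  invFun q :=
    ⟨glue k hk q.2.1 q.1.1, by
      refine ⟨⟨⟨n - 1 - k, by omega⟩, rfl, glue_univ k hk _ _⟩, ?_, ?_⟩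
      · have h0 : {w | Univ (topPerm (glue k hk q.2.1 q.1.1) k hk (glue_univ k hk q.2.1 q.1.1)) w}.ncard
            = 0 := by rw [top_glue]; exact q.2.2
        exact (top_ncard hk (glue_univ k hk q.2.1 q.1.1)).mp h0
      · have h1 := bot_ncard hk (glue_univ k hk q.2.1 q.1.1)
        rw [bot_glue] at h1
        rw [← h1]
        exact q.1.2⟩
  left_inv p := Subtype.ext (glue_top_bot hk (splitAt_univ hk p.2))
  right_inv q := by
    apply Prod.ext
    · apply Subtype.ext
      exact bot_glue k hk _ _ (glue_univ k hk q.2.1 q.1.1)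
    · apply Subtype.ext
      exact top_glue k hk _ _ (glue_univ k hk q.2.1 q.1.1)

theorem fDom_eq_univ (m s : ℕ) :
    fDom m s = Nat.card {ρ : Equiv.Perm (Fin m) // {w | Univ ρ w}.ncard = s} := by
  unfold fDom
  apply Nat.card_congr
  apply Equiv.subtypeEquivRight
  intro ρ
  have : {k | Dominates (permGraph ρ) {k}} = {w | Univ ρ w} := Set.ext fun w => dom_iff ρ w
  rw [this]

theorem key_card (t k : ℕ) (hk : k + 1 ≤ n) :
    Nat.card {π : Equiv.Perm (Fin n) // SplitAt t k π} = fDom (n - 1 - k) (t - 1) * fDom k 0 := by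
  rw [Nat.card_congr (splitEquiv t k hk), Nat.card_prod, fDom_eq_univ, fDom_eq_univ]

end FD


theorem fDom_recursion {n t : ℕ} (ht1 : 1 ≤ t) (ht2 : t ≤ n) :
    fDom n t = ∑ k ∈ Finset.range (n - t + 1), fDom (n - 1 - k) (t - 1) * fDom k 0 := by
  classical
  rw [FD.fDom_eq_univ n t]
  rw [Nat.card_eq_fintype_card, Fintype.card_subtype]
  have hsplit : Finset.univ.filter (fun π : Equiv.Perm (Fin n) => {x | FD.Univ π x}.ncard = t) =
      (Finset.range (n - t + 1)).biUnion
        (fun k => Finset.univ.filter (fun π : Equiv.Perm (Fin n) => FD.SplitAt t k π)) := by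
    ext π
    simp only [Finset.mem_filter, Finset.mem_univ, true_and, Finset.mem_biUnion,
      Finset.mem_range]
    constructor
    · intro hπ
      have hne : {x : Fin n | FD.Univ π x}.Nonempty := by
        apply Set.nonempty_of_ncard_ne_zero
        omega
      have hfin := Set.toFinite {x : Fin n | FD.Univ π x}
      have hFne : hfin.toFinset.Nonempty := by
        rw [Set.Finite.toFinset_nonempty]
        exact hne
      set v := hfin.toFinset.max' hFne with hvdef
      have hv : FD.Univ π v := by
        have := hfin.toFinset.max'_mem hFne
        rw [Set.Finite.mem_toFinset] at this
        exact this
      have hmax : ∀ x : Fin n, FD.Univ π x → x.val ≤ v.val := by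
        intro x hx
        have : x ∈ hfin.toFinset := by rw [Set.Finite.mem_toFinset]; exact hx
        exact hfin.toFinset.le_max' x this
      have hvlt := v.isLt
      refine ⟨n - 1 - v.val, ?_, ?_⟩
      swap
      · have hk1 : (n - 1 - v.val) + 1 ≤ n := by omega
        have hveq : v.val = n - 1 - (n - 1 - v.val) := by omega
        have hv' : FD.Univ π ⟨n - 1 - (n - 1 - v.val), by omega⟩ := by
          have hcast : v = ⟨n - 1 - (n - 1 - v.val), by omega⟩ := Fin.ext hveq
          exact hcast ▸ hv
        have hnone : ∀ x : Fin n, n - 1 - (n - 1 - v.val) < x.val → ¬ FD.Univ π x := by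
          intro x hx hux
          have := hmax x hux
          omega
        refine ⟨⟨v, hveq, hv⟩, hnone, ?_⟩
        have hsp := FD.ncard_univ_split hk1 hv'
        have h0 := (FD.top_ncard hk1 hv').mpr hnone
        have h1 := FD.bot_ncard hk1 hv'
        omega
      · -- n - 1 - v.val < n - t + 1
        have hk1 : (n - 1 - v.val) + 1 ≤ n := by omega
        have hveq : v.val = n - 1 - (n - 1 - v.val) := by omega
        have hv' : FD.Univ π ⟨n - 1 - (n - 1 - v.val), by omega⟩ := by
          have hcast : v = ⟨n - 1 - (n - 1 - v.val), by omega⟩ := Fin.ext hveq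
          exact hcast ▸ hv
        have hnone : ∀ x : Fin n, n - 1 - (n - 1 - v.val) < x.val → ¬ FD.Univ π x := by
          intro x hx hux
          have := hmax x hux
          omega
        have hsp := FD.ncard_univ_split hk1 hv'
        have h0 := (FD.top_ncard hk1 hv').mpr hnone
        have hb := Set.ncard_le_ncard
          (Set.subset_univ {w | FD.Univ (FD.botPerm π (n - 1 - v.val) hk1 hv') w})
          (Set.toFinite _)
        rw [Set.ncard_univ, Nat.card_eq_fintype_card, Fintype.card_fin] at hb
        omega
    · rintro ⟨k, hkr, hsk⟩
      have hk1 : k + 1 ≤ n := by omega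
      exact FD.splitAt_total ht1 hk1 hsk
  rw [hsplit, Finset.card_biUnion]
  · apply Finset.sum_congr rfl
    intro k hkr
    rw [Finset.mem_range] at hkr
    have hk1 : k + 1 ≤ n := by omega
    rw [← FD.key_card t k hk1, Nat.card_eq_fintype_card, Fintype.card_subtype]
  · intro k hk k' hk' hne
    rw [Finset.mem_coe, Finset.mem_range] at hk hk'
    rw [Function.onFun, Finset.disjoint_left]
    intro π hπ hπ'
    rw [Finset.mem_filter] at hπ hπ'
    have hs := hπ.2
    have hs' := hπ'.2
    have hval : n - 1 - k ≠ n - 1 - k' := by omega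
    rcases lt_or_gt_of_ne hval with hlt | hlt
    · obtain ⟨v, hveq, hu⟩ := hs'.1
      exact hs.2.1 v (by omega) hu
    · obtain ⟨v, hveq, hu⟩ := hs.1
      exact hs'.2.1 v (by omega) hu
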